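/- For every q-ary DMC W (q = 2^r) and every j with 1 ≤ j ≤ r−1: Z_max^{(r−j)}(W⁻) ≤ Σ_{l=1}^{j} (q/2^l)·Z_max^{(r−l+1)}(W) + (q/2^j)·Z_max^{(r−j)}(W), i.e. Z_max^{(r−j)}(W⁻) ≤ (q/2)·Z_max^{(r)}(W) + (q/4)·Z_max^{(r−1)}(W) + ⋯ + (q/2^j)·Z_max^{(r−j+1)}(W) + (q/2^j)·Z_max^{(r−j)}(W). -/

import Mathlib

open Finset

instance (r : ℕ) : NeZero (2 ^ r) := ⟨pow_ne_zero r two_ne_zero⟩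

/-- The Bhattacharyya parameter `Z(W; x, x') = ∑_y √(W x y · W x' y)` of a pair of inputs. -/
noncomputable def bhat {q : ℕ} {Y : Type*} [Fintype Y] (W : ZMod q → Y → ℝ) (x x' : ZMod q) : ℝ :=
  ∑ y, Real.sqrt (W x y * W x' y)

/-- `Z_v(W) = (1/q) ∑_x Z(W; x, x+v)`. -/
noncomputable def Zv {q : ℕ} [NeZero q] {Y : Type*} [Fintype Y] (W : ZMod q → Y → ℝ) (v : ZMod q) : ℝ :=
  (1 / (q : ℝ)) * ∑ x, bhat W x (x + v)

/-- `W` is a discrete memoryless channel: nonnegative entries and rows summing to one. -/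
def IsDMC {q : ℕ} {Y : Type*} [Fintype Y] (W : ZMod q → Y → ℝ) : Prop :=
  (∀ x y, 0 ≤ W x y) ∧ ∀ x, ∑ y, W x y = 1

/-- The ordered weight `wt(v) = r - ν₂(v̄)` of `v : ZMod (2^r)`. -/
def owt (r : ℕ) {q : ℕ} (v : ZMod q) : ℕ := r - padicValNat 2 v.val

/-- The `i`-th average Bhattacharyya distance `Z_i(W) = 2^{-(i-1)} ∑_{v ∈ X_i} Z_v(W)`. -/
noncomputable def Zi (r : ℕ) {Y : Type*} [Fintype Y] (W : ZMod (2 ^ r) → Y → ℝ) (i : ℕ) : ℝ :=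
  (1 / 2 ^ (i - 1) : ℝ) *
    ∑ v ∈ univ.filter (fun v : ZMod (2 ^ r) => v ≠ 0 ∧ owt r v = i), Zv W v

/-- The symmetric capacity `I(W)` (with `0 log 0 = 0`). -/
noncomputable def symCap {q : ℕ} [NeZero q] {Y : Type*} [Fintype Y] (W : ZMod q → Y → ℝ) : ℝ :=
  ∑ x, ∑ y, (1 / (q : ℝ)) * W x y *
    Real.logb 2 (W x y / ∑ x', (1 / (q : ℝ)) * W x' y)

/-- `Z_max^{(j)}(W) = max_{v ∈ X_j} Z_v(W)` (as a supremum over the finite nonempty class `X_j`). -/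
noncomputable def Zmax (r : ℕ) {Y : Type*} [Fintype Y] (W : ZMod (2 ^ r) → Y → ℝ) (j : ℕ) : ℝ :=
  ⨆ v : {v : ZMod (2 ^ r) // v ≠ 0 ∧ owt r v = j}, Zv W v.1

/-- The Arıkan minus transform `W⁻ u₁ (y₁,y₂) = (1/q) ∑_{u₂} W (u₁+u₂) y₁ · W u₂ y₂`. -/
noncomputable def Wminus {q : ℕ} [NeZero q] {Y : Type*} [Fintype Y] (W : ZMod q → Y → ℝ) :
    ZMod q → Y × Y → ℝ :=
  fun u₁ p => (1 / (q : ℝ)) * ∑ u₂, W (u₁ + u₂) p.1 * W u₂ p.2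

/-- The Arıkan plus transform `W⁺ u₂ (y₁,y₂,u₁) = (1/q) W (u₁+u₂) y₁ · W u₂ y₂`. -/
noncomputable def Wplus {q : ℕ} [NeZero q] {Y : Type*} [Fintype Y] (W : ZMod q → Y → ℝ) :
    ZMod q → Y × Y × ZMod q → ℝ :=
  fun u₂ p => (1 / (q : ℝ)) * W (p.2.2 + u₂) p.1 * W u₂ p.2.1

/-- The restricted channel `W^{[r-k]}` for the `r-k` least significant bits. -/
noncomputable def Wres (r k : ℕ) {Y : Type*} [Fintype Y] (W : ZMod (2 ^ r) → Y → ℝ) :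
    ZMod (2 ^ (r - k)) → Y → ℝ :=
  fun u y => (1 / 2 ^ k : ℝ) *
    ∑ x ∈ univ.filter (fun x : ZMod (2 ^ r) => x.val % 2 ^ (r - k) = u.val), W x y

/-! ### Auxiliary lemmas -/

private lemma sqrt_add_le' (a b : ℝ) (ha : 0 ≤ a) (hb : 0 ≤ b) :
    Real.sqrt (a + b) ≤ Real.sqrt a + Real.sqrt b := by
  have h : Real.sqrt (a + b) ≤ Real.sqrt ((Real.sqrt a + Real.sqrt b) ^ 2) := by
    apply Real.sqrt_le_sqrt
    nlinarith [Real.sq_sqrt ha, Real.sq_sqrt hb, Real.sqrt_nonneg a, Real.sqrt_nonneg b,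
      mul_nonneg (Real.sqrt_nonneg a) (Real.sqrt_nonneg b)]
  rwa [Real.sqrt_sq (by positivity)] at h

private lemma sqrt_sum_le {α : Type*} (s : Finset α) (f : α → ℝ) (hf : ∀ a ∈ s, 0 ≤ f a) :
    Real.sqrt (∑ a ∈ s, f a) ≤ ∑ a ∈ s, Real.sqrt (f a) := by
  induction s using Finset.cons_induction with
  | empty => simp
  | cons a s ha ih =>
    rw [Finset.sum_cons, Finset.sum_cons]
    have h1 : 0 ≤ f a := hf a (Finset.mem_cons_self _ _)
    have h2 : 0 ≤ ∑ x ∈ s, f x :=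
      Finset.sum_nonneg fun x hx => hf x (Finset.mem_cons.2 (Or.inr hx))
    exact (sqrt_add_le' _ _ h1 h2).trans
      (add_le_add_right (ih fun x hx => hf x (Finset.mem_cons.2 (Or.inr hx))) _)

private lemma sqrt_sum_mul_sum_le {α : Type*} [Fintype α] (a b : α → ℝ)
    (ha : ∀ i, 0 ≤ a i) (hb : ∀ i, 0 ≤ b i) :
    Real.sqrt ((∑ i, a i) * ∑ k, b k) ≤ ∑ u : α × α, Real.sqrt (a u.1 * b u.2) := by
  rw [Fintype.sum_prod_type, Finset.sum_mul_sum]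
  calc Real.sqrt (∑ i, ∑ k, a i * b k)
      ≤ ∑ i, Real.sqrt (∑ k, a i * b k) :=
        sqrt_sum_le _ _ fun i _ => Finset.sum_nonneg fun k _ => mul_nonneg (ha i) (hb k)
    _ ≤ ∑ i, ∑ k, Real.sqrt (a i * b k) :=
        Finset.sum_le_sum fun i _ => sqrt_sum_le _ _ fun k _ => mul_nonneg (ha i) (hb k)

section DMC
variable {q : ℕ} {Y : Type*} [Fintype Y] {W : ZMod q → Y → ℝ}

private lemma bhat_nonneg (W : ZMod q → Y → ℝ) (x x' : ZMod q) : 0 ≤ bhat W x x' :=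
  Finset.sum_nonneg fun _ _ => Real.sqrt_nonneg _

private lemma bhat_self (hW : IsDMC W) (x : ZMod q) : bhat W x x = 1 := by
  unfold bhat
  rw [show (1 : ℝ) = ∑ y, W x y from (hW.2 x).symm]
  exact Finset.sum_congr rfl fun y _ => Real.sqrt_mul_self (hW.1 x y)

private lemma bhat_le_one (hW : IsDMC W) (x x' : ZMod q) : bhat W x x' ≤ 1 := by
  have h : bhat W x x' ≤ ∑ y, (W x y + W x' y) / 2 := by
    refine Finset.sum_le_sum fun y _ => ?_
    rw [Real.sqrt_mul (hW.1 x y)]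
    nlinarith [Real.sq_sqrt (hW.1 x y), Real.sq_sqrt (hW.1 x' y),
      sq_nonneg (Real.sqrt (W x y) - Real.sqrt (W x' y))]
  refine h.trans_eq ?_
  rw [← Finset.sum_div, Finset.sum_add_distrib, hW.2 x, hW.2 x']
  norm_num

variable [NeZero q]

private lemma hq_pos : (0 : ℝ) < (q : ℝ) := by
  exact_mod_cast Nat.pos_of_ne_zero (NeZero.ne q)

private lemma Zv_nonneg (W : ZMod q → Y → ℝ) (v : ZMod q) : 0 ≤ Zv W v :=
  mul_nonneg (by positivity) (Finset.sum_nonneg fun x _ => bhat_nonneg W x (x + v))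

private lemma Zv_le_one (hW : IsDMC W) (v : ZMod q) : Zv W v ≤ 1 := by
  unfold Zv
  have hq : (0 : ℝ) < (q : ℝ) := hq_pos
  have h : ∑ x : ZMod q, bhat W x (x + v) ≤ (q : ℝ) := by
    calc ∑ x : ZMod q, bhat W x (x + v) ≤ ∑ _x : ZMod q, (1 : ℝ) :=
          Finset.sum_le_sum fun x _ => bhat_le_one hW _ _
      _ = (q : ℝ) := by simp [Finset.card_univ, ZMod.card]
  rw [one_div]
  calc (q : ℝ)⁻¹ * ∑ x : ZMod q, bhat W x (x + v) ≤ (q : ℝ)⁻¹ * (q : ℝ) :=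
        mul_le_mul_of_nonneg_left h (by positivity)
    _ = 1 := by field_simp

private lemma Zv_zero (hW : IsDMC W) : Zv W (0 : ZMod q) = 1 := by
  unfold Zv
  have hq : (0 : ℝ) < (q : ℝ) := hq_pos
  have h : ∀ x : ZMod q, bhat W x (x + 0) = 1 := fun x => by
    rw [add_zero]; exact bhat_self hW x
  rw [Finset.sum_congr rfl fun x _ => h x]
  simp [Finset.card_univ, ZMod.card]

/-- The key single-step bound: `Z_v(W⁻) ≤ ∑_d Z_d(W) Z_{v+d}(W)`. -/
private lemma Zv_Wminus_le (hW : IsDMC W) (v : ZMod q) :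
    Zv (Wminus W) v ≤ ∑ d : ZMod q, Zv W d * Zv W (v + d) := by
  have hWn := hW.1
  have hq : (0 : ℝ) < (q : ℝ) := hq_pos
  have key : ∀ u₁ : ZMod q, bhat (Wminus W) u₁ (u₁ + v) ≤
      (1 / (q : ℝ)) * ∑ u : ZMod q × ZMod q,
        bhat W (u₁ + u.1) (u₁ + v + u.2) * bhat W u.1 u.2 := by
    intro u₁
    have h2 : ∀ p : Y × Y,
        Real.sqrt (Wminus W u₁ p * Wminus W (u₁ + v) p) ≤
        (1 / (q : ℝ)) * ∑ u : ZMod q × ZMod q,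
          Real.sqrt (W (u₁ + u.1) p.1 * W (u₁ + v + u.2) p.1) *
            Real.sqrt (W u.1 p.2 * W u.2 p.2) := by
      intro p
      have e1 : Wminus W u₁ p * Wminus W (u₁ + v) p
          = (1 / (q : ℝ)) ^ 2 * ((∑ u₂ : ZMod q, W (u₁ + u₂) p.1 * W u₂ p.2) *
              ∑ u₂' : ZMod q, W (u₁ + v + u₂') p.1 * W u₂' p.2) := by
        simp only [Wminus]; ring
      rw [e1, Real.sqrt_mul (sq_nonneg _), Real.sqrt_sq (by positivity)]
      refine mul_le_mul_of_nonneg_left ?_ (by positivity)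
      refine (sqrt_sum_mul_sum_le _ _
        (fun i => mul_nonneg (hWn _ _) (hWn _ _))
        (fun i => mul_nonneg (hWn _ _) (hWn _ _))).trans_eq ?_
      refine Finset.sum_congr rfl fun u _ => ?_
      rw [show W (u₁ + u.1) p.1 * W u.1 p.2 * (W (u₁ + v + u.2) p.1 * W u.2 p.2)
          = W (u₁ + u.1) p.1 * W (u₁ + v + u.2) p.1 * (W u.1 p.2 * W u.2 p.2) by ring,
        Real.sqrt_mul (mul_nonneg (hWn _ _) (hWn _ _))]
    calc bhat (Wminus W) u₁ (u₁ + v)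
        ≤ ∑ p : Y × Y, (1 / (q : ℝ)) * ∑ u : ZMod q × ZMod q,
            Real.sqrt (W (u₁ + u.1) p.1 * W (u₁ + v + u.2) p.1) *
              Real.sqrt (W u.1 p.2 * W u.2 p.2) :=
          Finset.sum_le_sum fun p _ => h2 p
      _ = (1 / (q : ℝ)) * ∑ u : ZMod q × ZMod q, ∑ p : Y × Y,
            Real.sqrt (W (u₁ + u.1) p.1 * W (u₁ + v + u.2) p.1) *
              Real.sqrt (W u.1 p.2 * W u.2 p.2) := by
          rw [← Finset.mul_sum, Finset.sum_comm]
      _ = (1 / (q : ℝ)) * ∑ u : ZMod q × ZMod q,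
            bhat W (u₁ + u.1) (u₁ + v + u.2) * bhat W u.1 u.2 := by
          congr 1
          refine Finset.sum_congr rfl fun u _ => ?_
          rw [bhat, bhat, Finset.sum_mul_sum, Fintype.sum_prod_type]
  have reidx : ∀ u₁ : ZMod q, (1 / (q : ℝ)) * ∑ u : ZMod q × ZMod q,
        bhat W (u₁ + u.1) (u₁ + v + u.2) * bhat W u.1 u.2
      = (1 / (q : ℝ)) * ∑ u₂ : ZMod q, ∑ d : ZMod q,
        bhat W (u₁ + u₂) ((u₁ + u₂) + (v + d)) * bhat W u₂ (u₂ + d) := by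
    intro u₁
    congr 1
    rw [Fintype.sum_prod_type]
    refine Finset.sum_congr rfl fun u₂ _ => ?_
    refine (Fintype.sum_equiv (Equiv.addLeft u₂) _ _ fun d => ?_).symm
    simp only [Equiv.coe_addLeft]
    rw [show u₁ + v + (u₂ + d) = (u₁ + u₂) + (v + d) by ring]
  calc Zv (Wminus W) v
      ≤ (1 / (q : ℝ)) * ∑ u₁ : ZMod q, ((1 / (q : ℝ)) * ∑ u₂ : ZMod q, ∑ d : ZMod q,
          bhat W (u₁ + u₂) ((u₁ + u₂) + (v + d)) * bhat W u₂ (u₂ + d)) := by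
        rw [Zv]
        refine mul_le_mul_of_nonneg_left (Finset.sum_le_sum fun u₁ _ => ?_) (by positivity)
        exact (key u₁).trans_eq (reidx u₁)
    _ = (1 / (q : ℝ)) ^ 2 * ∑ u₁ : ZMod q, ∑ u₂ : ZMod q, ∑ d : ZMod q,
          bhat W (u₁ + u₂) ((u₁ + u₂) + (v + d)) * bhat W u₂ (u₂ + d) := by
        rw [← Finset.mul_sum]; ring
    _ = (1 / (q : ℝ)) ^ 2 * ∑ d : ZMod q, ∑ u₂ : ZMod q, ∑ u₁ : ZMod q,
          bhat W (u₁ + u₂) ((u₁ + u₂) + (v + d)) * bhat W u₂ (u₂ + d) := by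
        congr 1
        rw [Finset.sum_comm]
        refine (Finset.sum_congr rfl fun u₂ _ => Finset.sum_comm).trans ?_
        exact Finset.sum_comm
    _ = ∑ d : ZMod q, Zv W (v + d) * Zv W d := by
        rw [Finset.mul_sum]
        refine Finset.sum_congr rfl fun d _ => ?_
        have inner : ∀ u₂ : ZMod q,
            ∑ u₁ : ZMod q, bhat W (u₁ + u₂) ((u₁ + u₂) + (v + d)) * bhat W u₂ (u₂ + d)
            = (∑ x : ZMod q, bhat W x (x + (v + d))) * bhat W u₂ (u₂ + d) := by
          intro u₂
          rw [← Finset.sum_mul]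
          congr 1
          exact Fintype.sum_equiv (Equiv.addRight u₂) _ _ fun u₁ => rfl
        rw [Finset.sum_congr rfl fun u₂ _ => inner u₂, ← Finset.mul_sum]
        rw [Zv, Zv]; ring
    _ = ∑ d : ZMod q, Zv W d * Zv W (v + d) :=
        Finset.sum_congr rfl fun d _ => mul_comm _ _

end DMC

/-- for `1 ≤ j ≤ r-1`,
`Z_max^{(r-j)}(W⁻) ≤ ∑_{l=1}^{j} (q/2^l) Z_max^{(r-l+1)}(W) + (q/2^j) Z_max^{(r-j)}(W)`. -/
theorem Zmax_minus_general (r : ℕ) (hr : 2 ≤ r) {Y : Type*} [Fintype Y] [Nonempty Y]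
    (W : ZMod (2 ^ r) → Y → ℝ) (hW : IsDMC W) (j : ℕ) (hj1 : 1 ≤ j) (hj2 : j ≤ r - 1) :
    Zmax r (Wminus W) (r - j) ≤
      (∑ l ∈ Finset.Icc 1 j, ((2 ^ r : ℝ) / 2 ^ l) * Zmax r W (r - l + 1)) +
        ((2 ^ r : ℝ) / 2 ^ j) * Zmax r W (r - j) := by
  have hjr : j < r := by omega
  -- Zv ≤ Zmax bound
  have Zle : ∀ (d : ZMod (2 ^ r)) (i : ℕ), d ≠ 0 → owt r d = i → Zv W d ≤ Zmax r W i := by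
    intro d i h1 h2
    exact le_ciSup (Set.Finite.bddAbove (Set.finite_range
      fun v : {v : ZMod (2 ^ r) // v ≠ 0 ∧ owt r v = i} => Zv W v.1)) ⟨d, h1, h2⟩
  -- the class X_{r-j} is nonempty
  have hval : (((2 ^ j : ℕ) : ZMod (2 ^ r))).val = 2 ^ j :=
    ZMod.val_cast_of_lt (Nat.pow_lt_pow_right one_lt_two hjr)
  haveI hne : Nonempty {v : ZMod (2 ^ r) // v ≠ 0 ∧ owt r v = r - j} := by
    refine ⟨⟨((2 ^ j : ℕ) : ZMod (2 ^ r)), ?_, ?_⟩⟩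
    · intro h
      rw [h, ZMod.val_zero] at hval
      exact absurd hval.symm (Nat.pos_of_ne_zero (pow_ne_zero j two_ne_zero) |>.ne')
    · unfold owt
      rw [hval, padicValNat.prime_pow]
  rw [Zmax]
  refine ciSup_le ?_
  rintro ⟨v, hv0, hvw⟩
  have hvval : v.val ≠ 0 := fun h => hv0 ((ZMod.val_eq_zero v).1 h)
  have hplt : padicValNat 2 v.val < r := by
    by_contra h
    push_neg at h
    have h1 : (2 : ℕ) ^ r ∣ v.val := (padicValNat_dvd_iff_le hvval).2 h
    have h2 := Nat.le_of_dvd (Nat.pos_of_ne_zero hvval) h1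
    have h3 := ZMod.val_lt v
    omega
  have hpv : padicValNat 2 v.val = j := by
    unfold owt at hvw
    omega
  refine le_trans (Zv_Wminus_le hW v) ?_
  -- classification
  set c : ZMod (2 ^ r) → ℕ := fun d => if 2 ^ j ∣ d.val then j else padicValNat 2 d.val with hc
  have hmaps : ∀ d ∈ (univ : Finset (ZMod (2 ^ r))), c d ∈ Finset.range (j + 1) := by
    intro d _
    simp only [hc, Finset.mem_range]
    split
    · omega
    · rename_i hnd
      have hd0 : d.val ≠ 0 := fun h => hnd (h ▸ dvd_zero _)
      by_contra hge
      push_neg at hge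
      exact hnd ((padicValNat_dvd_iff_le hd0).2 (by omega))
  rw [← Finset.sum_fiberwise_of_maps_to hmaps (fun d => Zv W d * Zv W (v + d)),
    Finset.sum_range_succ]
  -- counting
  have card_dvd : ∀ t, t ≤ r →
      (univ.filter fun d : ZMod (2 ^ r) => 2 ^ t ∣ d.val).card = 2 ^ (r - t) := by
    intro t ht
    have hpow : (2 : ℕ) ^ (r - t) * 2 ^ t = 2 ^ r := by
      rw [← pow_add]
      congr 1
      omega
    rw [← Finset.card_range (2 ^ (r - t))]
    refine Finset.card_bij' (fun d _ => d.val / 2 ^ t)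
      (fun n _ => ((n * 2 ^ t : ℕ) : ZMod (2 ^ r))) ?_ ?_ ?_ ?_
    · intro d hd
      simp only [Finset.mem_filter, Finset.mem_univ, true_and] at hd
      rw [Finset.mem_range]
      have := ZMod.val_lt d
      rw [Nat.div_lt_iff_lt_mul (pow_pos two_pos t)]
      omega
    · intro n hn
      rw [Finset.mem_range] at hn
      simp only [Finset.mem_filter, Finset.mem_univ, true_and]
      have hlt : n * 2 ^ t < 2 ^ r := by
        calc n * 2 ^ t < 2 ^ (r - t) * 2 ^ t :=
              (Nat.mul_lt_mul_right (pow_pos two_pos t)).mpr hn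
          _ = 2 ^ r := hpow
      rw [ZMod.val_cast_of_lt hlt]
      exact dvd_mul_left _ _
    · intro d hd
      simp only [Finset.mem_filter, Finset.mem_univ, true_and] at hd
      show ((d.val / 2 ^ t * 2 ^ t : ℕ) : ZMod (2 ^ r)) = d
      rw [Nat.div_mul_cancel hd]
      exact ZMod.natCast_rightInverse d
    · intro n hn
      rw [Finset.mem_range] at hn
      have hlt : n * 2 ^ t < 2 ^ r := by
        calc n * 2 ^ t < 2 ^ (r - t) * 2 ^ t :=
              (Nat.mul_lt_mul_right (pow_pos two_pos t)).mpr hn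
          _ = 2 ^ r := hpow
      show ((n * 2 ^ t : ℕ) : ZMod (2 ^ r)).val / 2 ^ t = n
      rw [ZMod.val_cast_of_lt hlt, Nat.mul_div_cancel n (pow_pos two_pos t)]
  -- the fibers
  have fiber_lt : ∀ t, t < j → (univ.filter fun d : ZMod (2 ^ r) => c d = t)
      = univ.filter (fun d : ZMod (2 ^ r) => 2 ^ t ∣ d.val)
        \ univ.filter (fun d : ZMod (2 ^ r) => 2 ^ (t + 1) ∣ d.val) := by
    intro t htj
    ext d
    simp only [Finset.mem_filter, Finset.mem_sdiff, Finset.mem_univ, true_and, hc]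
    constructor
    · intro h
      by_cases hdj : 2 ^ j ∣ d.val
      · rw [if_pos hdj] at h
        omega
      · rw [if_neg hdj] at h
        have hd0 : d.val ≠ 0 := fun hh => hdj (hh ▸ dvd_zero _)
        refine ⟨(padicValNat_dvd_iff_le hd0).2 (by omega), fun hdvd => ?_⟩
        have := (padicValNat_dvd_iff_le hd0).1 hdvd
        omega
    · rintro ⟨h1, h2⟩
      have hd0 : d.val ≠ 0 := fun hh => h2 (hh ▸ dvd_zero _)
      have hle := (padicValNat_dvd_iff_le hd0).1 h1
      have hlt2 : ¬ (t + 1 ≤ padicValNat 2 d.val) :=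
        fun hge => h2 ((padicValNat_dvd_iff_le hd0).2 hge)
      have hdj : ¬ 2 ^ j ∣ d.val := fun hdvd => by
        have := (padicValNat_dvd_iff_le hd0).1 hdvd
        omega
      rw [if_neg hdj]
      omega
  have fiber_j : (univ.filter fun d : ZMod (2 ^ r) => c d = j)
      = univ.filter fun d : ZMod (2 ^ r) => 2 ^ j ∣ d.val := by
    ext d
    simp only [Finset.mem_filter, Finset.mem_univ, true_and, hc]
    constructor
    · intro h
      by_cases hdj : 2 ^ j ∣ d.val
      · exact hdj
      · rw [if_neg hdj] at h
        have hd0 : d.val ≠ 0 := fun hh => hdj (hh ▸ dvd_zero _)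
        exact absurd ((padicValNat_dvd_iff_le hd0).2 h.ge) hdj
    · intro h
      rw [if_pos h]
  have card_fiber_lt : ∀ t, t < j →
      (univ.filter fun d : ZMod (2 ^ r) => c d = t).card = 2 ^ (r - t - 1) := by
    intro t htj
    have hsub : univ.filter (fun d : ZMod (2 ^ r) => 2 ^ (t + 1) ∣ d.val)
        ⊆ univ.filter (fun d : ZMod (2 ^ r) => 2 ^ t ∣ d.val) := by
      intro x hx
      simp only [Finset.mem_filter, Finset.mem_univ, true_and] at hx ⊢
      exact dvd_trans (pow_dvd_pow 2 t.le_succ) hx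
    rw [fiber_lt t htj, Finset.card_sdiff_of_subset hsub, card_dvd t (by omega),
      card_dvd (t + 1) (by omega)]
    obtain ⟨k, hk⟩ : ∃ k, r - t = k + 1 := ⟨r - t - 1, by omega⟩
    rw [show r - (t + 1) = k by omega, show r - t - 1 = k by omega, hk, pow_succ]
    omega
  have card_fiber_j : (univ.filter fun d : ZMod (2 ^ r) => c d = j).card = 2 ^ (r - j) := by
    rw [fiber_j, card_dvd j (by omega)]
  -- combine
  refine add_le_add ?_ ?_
  · -- sum over t < j
    rw [show Finset.Icc 1 j = Finset.Ico 1 (j + 1) from (Finset.Ico_add_one_right_eq_Icc 1 j).symm,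
      Finset.sum_Ico_eq_sum_range]
    simp only [Nat.add_sub_cancel]
    refine Finset.sum_le_sum fun t ht => ?_
    rw [Finset.mem_range] at ht
    have hbound : ∀ d ∈ univ.filter fun d : ZMod (2 ^ r) => c d = t,
        Zv W d * Zv W (v + d) ≤ Zmax r W (r - t) := by
      intro d hd
      rw [fiber_lt t ht, Finset.mem_sdiff] at hd
      obtain ⟨hd1, hd2⟩ := hd
      simp only [Finset.mem_filter, Finset.mem_univ, true_and] at hd1 hd2
      have hd0' : d.val ≠ 0 := fun hh => hd2 (hh ▸ dvd_zero _)
      have hd0 : d ≠ 0 := fun hh => hd0' (by rw [hh, ZMod.val_zero])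
      have hpd : padicValNat 2 d.val = t := by
        have h1 := (padicValNat_dvd_iff_le hd0').1 hd1
        have h2' : ¬ (t + 1 ≤ padicValNat 2 d.val) :=
          fun hge => hd2 ((padicValNat_dvd_iff_le hd0').2 hge)
        omega
      calc Zv W d * Zv W (v + d) ≤ Zv W d :=
            mul_le_of_le_one_right (Zv_nonneg W d) (Zv_le_one hW _)
        _ ≤ Zmax r W (r - t) := Zle d _ hd0 (by unfold owt; rw [hpd])
    calc ∑ d ∈ univ.filter fun d : ZMod (2 ^ r) => c d = t, Zv W d * Zv W (v + d)
        ≤ ∑ _d ∈ univ.filter fun d : ZMod (2 ^ r) => c d = t, Zmax r W (r - t) :=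
          Finset.sum_le_sum hbound
      _ = (2 ^ (r - t - 1) : ℝ) * Zmax r W (r - t) := by
          rw [Finset.sum_const, card_fiber_lt t ht, nsmul_eq_mul]
          norm_num
      _ = ((2 ^ r : ℝ) / 2 ^ (1 + t)) * Zmax r W (r - (1 + t) + 1) := by
          have e1 : r - (1 + t) + 1 = r - t := by omega
          have e2 : (2 ^ r : ℝ) / 2 ^ (1 + t) = 2 ^ (r - t - 1) := by
            rw [div_eq_iff (by positivity), ← pow_add]
            congr 1
            omega
          rw [e1, e2]
  · -- the fiber t = j
    have hbound : ∀ d ∈ univ.filter fun d : ZMod (2 ^ r) => c d = j,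
        Zv W d * Zv W (v + d) ≤ Zmax r W (r - j) := by
      intro d hd
      rw [fiber_j, Finset.mem_filter] at hd
      have hdj : (2 : ℕ) ^ j ∣ d.val := hd.2
      by_cases hd0 : d = 0
      · rw [hd0, Zv_zero hW, one_mul, add_zero]
        exact Zle v _ hv0 (by unfold owt; rw [hpv])
      · have hd0' : d.val ≠ 0 := fun hh => hd0 ((ZMod.val_eq_zero d).1 hh)
        by_cases hvd : v + d = 0
        · rw [hvd, Zv_zero hW, mul_one]
          have hdval : d.val = 2 ^ r - v.val := by
            have hdv : d = -v := eq_neg_of_add_eq_zero_right hvd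
            rw [hdv, ZMod.neg_val, if_neg hv0]
          have hnd : ¬ (2 : ℕ) ^ (j + 1) ∣ d.val := by
            intro hdvd
            have h2r : (2 : ℕ) ^ (j + 1) ∣ 2 ^ r := pow_dvd_pow 2 (by omega)
            have hvle : v.val ≤ 2 ^ r := le_of_lt (ZMod.val_lt v)
            have hvv : (2 : ℕ) ^ (j + 1) ∣ v.val := by
              have hsub := Nat.dvd_sub h2r hdvd
              rwa [hdval, Nat.sub_sub_self hvle] at hsub
            have := (padicValNat_dvd_iff_le hvval).1 hvv
            omega
          have hpd : padicValNat 2 d.val = j := by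
            have h1 := (padicValNat_dvd_iff_le hd0').1 hdj
            have h2' : ¬ (j + 1 ≤ padicValNat 2 d.val) :=
              fun hge => hnd ((padicValNat_dvd_iff_le hd0').2 hge)
            omega
          exact Zle d _ hd0 (by unfold owt; rw [hpd])
        · by_cases h2d : (2 : ℕ) ^ (j + 1) ∣ d.val
          · have hvd0 : (v + d).val ≠ 0 := fun hh => hvd ((ZMod.val_eq_zero _).1 hh)
            have hmod : (v + d).val = (v.val + d.val) % 2 ^ r := ZMod.val_add v d
            have hdvd1 : (2 : ℕ) ^ j ∣ (v + d).val := by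
              rw [hmod, Nat.dvd_mod_iff (pow_dvd_pow 2 (by omega))]
              exact dvd_add (hpv ▸ pow_padicValNat_dvd)
                (dvd_trans (pow_dvd_pow 2 (by omega)) h2d)
            have hdvd2 : ¬ (2 : ℕ) ^ (j + 1) ∣ (v + d).val := by
              rw [hmod, Nat.dvd_mod_iff (pow_dvd_pow 2 (by omega))]
              intro hsum
              have hvv : (2 : ℕ) ^ (j + 1) ∣ v.val := by
                have := Nat.dvd_sub hsum h2d
                rwa [Nat.add_sub_cancel] at this
              have := (padicValNat_dvd_iff_le hvval).1 hvv
              omega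
            have hpd : padicValNat 2 (v + d).val = j := by
              have h1 := (padicValNat_dvd_iff_le hvd0).1 hdvd1
              have h2' : ¬ (j + 1 ≤ padicValNat 2 (v + d).val) :=
                fun hge => hdvd2 ((padicValNat_dvd_iff_le hvd0).2 hge)
              omega
            calc Zv W d * Zv W (v + d) ≤ Zv W (v + d) :=
                  mul_le_of_le_one_left (Zv_nonneg W _) (Zv_le_one hW d)
              _ ≤ Zmax r W (r - j) := Zle _ _ hvd (by unfold owt; rw [hpd])
          · have hpd : padicValNat 2 d.val = j := by
              have h1 := (padicValNat_dvd_iff_le hd0').1 hdj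
              have h2' : ¬ (j + 1 ≤ padicValNat 2 d.val) :=
                fun hge => h2d ((padicValNat_dvd_iff_le hd0').2 hge)
              omega
            calc Zv W d * Zv W (v + d) ≤ Zv W d :=
                  mul_le_of_le_one_right (Zv_nonneg W d) (Zv_le_one hW _)
              _ ≤ Zmax r W (r - j) := Zle d _ hd0 (by unfold owt; rw [hpd])
    calc ∑ d ∈ univ.filter fun d : ZMod (2 ^ r) => c d = j, Zv W d * Zv W (v + d)
        ≤ ∑ _d ∈ univ.filter fun d : ZMod (2 ^ r) => c d = j, Zmax r W (r - j) :=
          Finset.sum_le_sum hbound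
      _ = (2 ^ (r - j) : ℝ) * Zmax r W (r - j) := by
          rw [Finset.sum_const, card_fiber_j, nsmul_eq_mul]
          norm_num
      _ = ((2 ^ r : ℝ) / 2 ^ j) * Zmax r W (r - j) := by
          congr 1
          rw [eq_div_iff (by positivity : (2:ℝ) ^ j ≠ 0), ← pow_add]
          congr 1
          omega
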